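/- Let g be a complex semisimple Lie algebra with adjoint group G, identified with its dual via the Killing form, and let I be a G-invariant polynomial function on g. Then for every x in g, the differential dI(x) (viewed as an element of g via the Killing form) lies in the center of the centralizer g^x of x. -/

import Mathlib

open NormedSpace


/-- For a complex semisimple Lie algebra `g` (identified with its dual via the
Killing form) and a `G`-invariant polynomial function `I` on `g` with Killing-form gradient
`dI`, the element `dI x` lies in the center of the centralizer `g^x` of `x`, i.e. `dI x`
commutes with `x` and with every element of the centralizer of `x`. -/
theorem differential_of_invariant_mem_center_of_centralizer
    (g : Type*) [LieRing g] [LieAlgebra ℂ g] [Module.Finite ℂ g]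
    [LieAlgebra.IsKilling ℂ g] [LieAlgebra.IsSemisimple ℂ g]
    (I : g → ℂ) (dI : g → g)
    -- `I` is a polynomial function on `g`
    (hpoly : ∃ (n : ℕ) (bV : Module.Basis (Fin n) ℂ g) (P : MvPolynomial (Fin n) ℂ),
      ∀ x : g, I x = MvPolynomial.eval (fun i => bV.repr x i) P)
    -- `dI x` is the Killing-form gradient of `I` at `x`:  (dI(x), z) = d/dt I(x+tz)|₀
    (hgrad : ∀ x z : g,
      HasDerivAt (fun t : ℂ => I (x + t • z)) (killingForm ℂ g (dI x) z) 0)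
    -- `I` is invariant under the adjoint action of the adjoint group `G`
    (hinv : ∀ x z : g, HasDerivAt (fun t : ℂ => I (x + t • ⁅z, x⁆)) 0 0)
    (x : g) :
    ⁅dI x, x⁆ = 0 ∧ ∀ z : g, ⁅z, x⁆ = 0 → ⁅dI x, z⁆ = 0 := by
  obtain ⟨n, bV, P, hP⟩ := hpoly
  have : FiniteDimensional ℂ g := inferInstance
  set E := (Fin n → ℂ)
  let e : g ≃ₗ[ℂ] E := bV.equivFun
  let J : E → ℂ := fun v => MvPolynomial.eval v P
  have hIJ : ∀ y : g, I y = J (e y) := by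
    intro y
    simp only [J, e, Module.Basis.equivFun_apply, hP y]
    rfl
  have hJdiff : Differentiable ℂ J := fun v =>
    ((AnalyticOnNhd.eval_mvPolynomial (𝕜 := ℂ) P) v trivial).differentiableAt
  -- derivative of J along a line
  have lineD : ∀ p c : E, HasDerivAt (fun t : ℂ => J (p + t • c)) (fderiv ℂ J p c) 0 := by
    intro p c
    have hline : HasDerivAt (fun t : ℂ => p + t • c) c 0 :=
      (((hasDerivAt_id (0:ℂ)).smul_const c).const_add p).congr_deriv (by simp)
    have := (hJdiff (p + (0:ℂ) • c)).hasFDerivAt.comp_hasDerivAt 0 hline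
    simp only [zero_smul, add_zero] at this
    exact this
  -- the fderiv of J is the Killing gradient
  have L1 : ∀ y z : g, fderiv ℂ J (e y) (e z) = killingForm ℂ g (dI y) z := by
    intro y z
    have h1 : HasDerivAt (fun t : ℂ => I (y + t • z)) (fderiv ℂ J (e y) (e z)) 0 := by
      have := lineD (e y) (e z)
      refine this.congr_of_eventuallyEq (Filter.Eventually.of_forall fun t => ?_)
      show I (y + t • z) = J (e y + t • e z)
      rw [hIJ]; simp [map_add, map_smul]
    exact ((hgrad y z).unique h1).symm
  -- infinitesimal invariance
  have L2 : ∀ y w : g, fderiv ℂ J (e y) (e ⁅w, y⁆) = 0 := by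
    intro y w
    rw [L1]
    exact ((hgrad y ⁅w, y⁆).unique (hinv y w))
  -- the main claim
  have main : ∀ z : g, ⁅z, x⁆ = 0 → ⁅dI x, z⁆ = 0 := by
    intro z hz
    -- set up the one-parameter group exp (s • A) where A = e ∘ ad z ∘ e.symm
    let Aℓ : E →ₗ[ℂ] E :=
      e.toLinearMap ∘ₗ (LieAlgebra.ad ℂ g z) ∘ₗ e.symm.toLinearMap
    let A : E →L[ℂ] E := LinearMap.toContinuousLinearMap Aℓ
    have hexp0 : exp ((0:ℂ) • A) = 1 := by
      rw [zero_smul ℂ A, NormedSpace.exp_zero]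
    have hA : ∀ y : g, A (e y) = e ⁅z, y⁆ := by
      intro y
      simp [A, Aℓ, LieAlgebra.ad_apply]
    -- J is invariant under the flow of A
    have hconst : ∀ (u : E) (s : ℂ), J (exp (s • A) u) = J u := by
      intro u s
      have hcurve : ∀ s : ℂ, HasDerivAt (fun s : ℂ => exp (s • A) u)
          (A (exp (s • A) u)) s := by
        intro s
        have h1 : HasDerivAt (fun s : ℂ => exp (s • A)) (A * exp (s • A)) s :=
          hasDerivAt_exp_smul_const' A s
        have := h1.clm_apply (hasDerivAt_const s u)
        simpa using this
      have hh : ∀ s : ℂ, HasDerivAt (fun s : ℂ => J (exp (s • A) u)) 0 s := by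
        intro s
        have := (hJdiff (exp (s • A) u)).hasFDerivAt.comp_hasDerivAt s (hcurve s)
        have key : fderiv ℂ J (exp (s • A) u) (A (exp (s • A) u)) = 0 := by
          have h2 := L2 (e.symm (exp (s • A) u)) z
          rwa [LinearEquiv.apply_symm_apply, ← hA, LinearEquiv.apply_symm_apply] at h2
        rwa [key] at this
      have hd : Differentiable ℂ (fun s : ℂ => J (exp (s • A) u)) :=
        fun s => (hh s).differentiableAt
      have := is_const_of_deriv_eq_zero hd (fun s => (hh s).deriv) s 0
      simpa [hexp0] using this
    -- exp (s • A) fixes e x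
    have hfix : ∀ s : ℂ, exp (s • A) (e x) = e x := by
      have hAx : A (e x) = 0 := by rw [hA, hz, map_zero]
      intro s
      have hcurve : ∀ s : ℂ, HasDerivAt (fun s : ℂ => exp (s • A) (e x)) 0 s := by
        intro s
        have h1 : HasDerivAt (fun s : ℂ => exp (s • A)) (exp (s • A) * A) s :=
          hasDerivAt_exp_smul_const A s
        have := h1.clm_apply (hasDerivAt_const s (e x))
        simpa [hAx] using this
      have hd : Differentiable ℂ (fun s : ℂ => exp (s • A) (e x)) :=
        fun s => (hcurve s).differentiableAt
      have := is_const_of_deriv_eq_zero hd (fun s => (hcurve s).deriv) s 0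
      simpa [hexp0] using this
    -- the key identity : fderiv J (e x) is invariant along the flow applied to any vector
    have key : ∀ (v : g) (s : ℂ),
        fderiv ℂ J (e x) (exp (s • A) (e v)) = killingForm ℂ g (dI x) v := by
      intro v s
      have heq : (fun t : ℂ => J (e x + t • exp (s • A) (e v))) =
          (fun t : ℂ => I (x + t • v)) := by
        funext t
        have : e x + t • exp (s • A) (e v) = exp (s • A) (e (x + t • v)) := by
          rw [map_add, map_smul, map_add, (exp (s • A)).map_smul, hfix s]
        rw [this, hconst, hIJ]
      have h1 := lineD (e x) (exp (s • A) (e v))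
      rw [heq] at h1
      exact ((hgrad x v).unique h1).symm
    -- differentiate in s at 0 : κ(dI x, ⁅z, v⁆) = 0 for all v
    have final : ∀ v : g, killingForm ℂ g (dI x) ⁅z, v⁆ = 0 := by
      intro v
      have hcurve : HasDerivAt (fun s : ℂ => exp (s • A) (e v)) (A (e v)) 0 := by
        have h1 : HasDerivAt (fun s : ℂ => exp (s • A)) (A * exp ((0:ℂ) • A)) 0 :=
          hasDerivAt_exp_smul_const' A 0
        have := h1.clm_apply (hasDerivAt_const 0 (e v))
        simpa [hexp0] using this
      have hF : HasDerivAt (fun s : ℂ => fderiv ℂ J (e x) (exp (s • A) (e v)))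
          (fderiv ℂ J (e x) (A (e v))) 0 :=
        (fderiv ℂ J (e x)).hasFDerivAt.comp_hasDerivAt 0 hcurve
      have hFconst : HasDerivAt (fun s : ℂ => fderiv ℂ J (e x) (exp (s • A) (e v)))
          0 0 := by
        have : (fun s : ℂ => fderiv ℂ J (e x) (exp (s • A) (e v))) =
            fun _ : ℂ => killingForm ℂ g (dI x) v := funext fun s => key v s
        rw [this]; exact hasDerivAt_const 0 _
      have h0 : fderiv ℂ J (e x) (A (e v)) = 0 := hF.unique hFconst
      rw [hA, L1] at h0
      exact h0
    -- conclude by nondegeneracy of the Killing form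
    have nd := LieAlgebra.IsKilling.killingForm_nondegenerate ℂ g
    apply nd.1 ⁅dI x, z⁆
    intro v
    exact (LieModule.traceForm_apply_lie_apply ℂ g g (dI x) z v).trans (final v)
  exact ⟨main x (lie_self x), main⟩
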